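/- Let p be a prime and A a ℤ/pℤ-graded commutative ring with components A_i. Suppose that A_i^p = A_0 for all i = 1, …, p−1 and that A_i·A_{p−i} = A_0 for each i = 1, …, p−1. Then for every d ∈ {1, …, p−1}, the p-fold multiplication map A_d ⊗_{A_0} ⋯ ⊗_{A_0} A_d → A_0 (p tensor factors), a_1 ⊗ ⋯ ⊗ a_p ↦ a_1⋯a_p, is bijective. -/

import Mathlib

open scoped TensorProduct

section GradedSetup

variable {A : Type*} [CommRing A] {p : ℕ}
variable (𝒜 : ZMod p → Submodule ℤ A) [GradedRing 𝒜]

/-- Each component `𝒜 i` is a module over the degree-zero subring `𝒜 0`,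
with scalar multiplication induced by the ring multiplication. -/
instance gradeZeroModule (i : ZMod p) : Module (𝒜 (0 : ZMod p)) (𝒜 i) where
  smul r x := ⟨(r : A) * (x : A), by
    have h := SetLike.mul_mem_graded r.2 x.2
    rwa [zero_add] at h⟩
  one_smul x := Subtype.ext (one_mul _)
  mul_smul r s x := Subtype.ext (mul_assoc _ _ _)
  smul_zero r := Subtype.ext (mul_zero _)
  smul_add r x y := Subtype.ext (mul_add _ _ _)
  add_smul r s x := Subtype.ext (add_mul _ _ _)
  zero_smul x := Subtype.ext (zero_mul _)

private theorem update_prod_key {d : ZMod p} [DecidableEq (Fin p)]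
    (m : Fin p → 𝒜 d) (i : Fin p) (v : 𝒜 d) :
    (∏ j, ((Function.update m i v j : 𝒜 d) : A))
      = (v : A) * ∏ j ∈ Finset.univ \ {i}, ((m j : A)) :=
  calc (∏ j, ((Function.update m i v j : 𝒜 d) : A))
      = ∏ j, Function.update (fun k => ((m k : A))) i (v : A) j :=
        Finset.prod_congr rfl fun j _ =>
          Function.apply_update (fun _ w => ((w : 𝒜 d) : A)) m i v j
    _ = (v : A) * ∏ j ∈ Finset.univ \ {i}, ((m j : A)) :=
        Finset.prod_update_of_mem (Finset.mem_univ i) _ _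

/-- The `p`-fold multiplication, as a multilinear map
`𝒜 d × ⋯ × 𝒜 d → 𝒜 0`, `(a_1, …, a_p) ↦ a_1 ⋯ a_p`. -/
def pfoldMulMultilinear (d : ZMod p) :
    MultilinearMap (𝒜 (0 : ZMod p)) (fun _ : Fin p => 𝒜 d) (𝒜 (0 : ZMod p)) where
  toFun x := ⟨∏ i, ((x i : A)), by
    have h := SetLike.prod_mem_graded 𝒜 (fun _ : Fin p => d) (fun i => ((x i : A)))
      (F := Finset.univ) (fun i _ => (x i).2)
    simpa [Finset.sum_const, Finset.card_univ, nsmul_eq_mul, ZMod.natCast_self] using h⟩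
  map_update_add' m i x y := Subtype.ext <| by
    show (∏ j, ((Function.update m i (x + y) j : 𝒜 d) : A))
        = (∏ j, ((Function.update m i x j : 𝒜 d) : A))
          + (∏ j, ((Function.update m i y j : 𝒜 d) : A))
    rw [update_prod_key, update_prod_key, update_prod_key, AddMemClass.coe_add, add_mul]
  map_update_smul' m i r x := Subtype.ext <| by
    show (∏ j, ((Function.update m i (r • x) j : 𝒜 d) : A))
        = (r : A) * (∏ j, ((Function.update m i x j : 𝒜 d) : A))
    rw [update_prod_key, update_prod_key]
    show ((r : A) * (x : A)) * _ = (r : A) * ((x : A) * _)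
    rw [mul_assoc]



theorem coe_pfold (d : ZMod p) (f : Fin p → 𝒜 d) :
    ((pfoldMulMultilinear 𝒜 d f : 𝒜 (0 : ZMod p)) : A) = ∏ i, ((f i : A)) := rfl

theorem coe_smul' {d : ZMod p} (c : 𝒜 (0 : ZMod p)) (x : 𝒜 d) :
    ((c • x : 𝒜 d) : A) = (c : A) * (x : A) := rfl

theorem smulR_eq_mul (a b : 𝒜 (0 : ZMod p)) : a • b = a * b := by
  apply Subtype.ext
  show (a : A) * (b : A) = _
  rfl

/-- swap step -/
theorem pfold_step (d : ZMod p) (F G : Fin p → 𝒜 d) (i₀ : Fin p) (x y : 𝒜 d)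
    (hF : F i₀ = x) (hG : G i₀ = y) :
    pfoldMulMultilinear 𝒜 d (Function.update F i₀ y)
        • PiTensorProduct.tprod (𝒜 (0 : ZMod p)) (Function.update G i₀ x)
      = pfoldMulMultilinear 𝒜 d F • PiTensorProduct.tprod (𝒜 (0 : ZMod p)) G := by
  classical
  have h1 : pfoldMulMultilinear 𝒜 d (Function.update F i₀ y) • x
      = pfoldMulMultilinear 𝒜 d F • y := by
    apply Subtype.ext
    rw [coe_smul', coe_smul', coe_pfold, coe_pfold, update_prod_key]
    conv_rhs => rw [show F = Function.update F i₀ x by rw [← hF, Function.update_eq_self]]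
    rw [update_prod_key]
    ring
  calc pfoldMulMultilinear 𝒜 d (Function.update F i₀ y)
        • PiTensorProduct.tprod (𝒜 (0 : ZMod p)) (Function.update G i₀ x)
      = PiTensorProduct.tprod (𝒜 (0 : ZMod p))
          (Function.update G i₀ (pfoldMulMultilinear 𝒜 d (Function.update F i₀ y) • x)) := by
        rw [MultilinearMap.map_update_smul]
    _ = PiTensorProduct.tprod (𝒜 (0 : ZMod p))
          (Function.update G i₀ (pfoldMulMultilinear 𝒜 d F • y)) := by rw [h1]
    _ = pfoldMulMultilinear 𝒜 d F • PiTensorProduct.tprod (𝒜 (0 : ZMod p))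
          (Function.update G i₀ y) := by rw [MultilinearMap.map_update_smul]
    _ = _ := by rw [← hG, Function.update_eq_self]

theorem pfold_swap (d : ZMod p) (m b : Fin p → 𝒜 d) :
    pfoldMulMultilinear 𝒜 d m • PiTensorProduct.tprod (𝒜 (0 : ZMod p)) b
      = pfoldMulMultilinear 𝒜 d b • PiTensorProduct.tprod (𝒜 (0 : ZMod p)) m := by
  classical
  have key : ∀ j : ℕ, j ≤ p →
      pfoldMulMultilinear 𝒜 d (fun i : Fin p => if (i : ℕ) < j then b i else m i)
          • PiTensorProduct.tprod (𝒜 (0 : ZMod p))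
              (fun i : Fin p => if (i : ℕ) < j then m i else b i)
        = pfoldMulMultilinear 𝒜 d m • PiTensorProduct.tprod (𝒜 (0 : ZMod p)) b := by
    intro j
    induction j with
    | zero => intro _; simp only [Nat.not_lt_zero, if_false]
    | succ j ih =>
      intro hj
      have hjp : j < p := hj
      set i₀ : Fin p := ⟨j, hjp⟩ with hi₀
      have hval : ∀ i : Fin p, i ≠ i₀ → ((i : ℕ) < j + 1 ↔ (i : ℕ) < j) := by
        intro i hi
        have : (i : ℕ) ≠ j := fun h => hi (Fin.ext h)
        omega
      have hFe : (fun i : Fin p => if (i : ℕ) < j + 1 then b i else m i)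
          = Function.update (fun i : Fin p => if (i : ℕ) < j then b i else m i) i₀ (b i₀) := by
        funext i
        rcases eq_or_ne i i₀ with h | h
        · subst h; simp [hi₀]
        · rw [Function.update_of_ne h, if_congr (hval i h) rfl rfl]
      have hGe : (fun i : Fin p => if (i : ℕ) < j + 1 then m i else b i)
          = Function.update (fun i : Fin p => if (i : ℕ) < j then m i else b i) i₀ (m i₀) := by
        funext i
        rcases eq_or_ne i i₀ with h | h
        · subst h; simp [hi₀]
        · rw [Function.update_of_ne h, if_congr (hval i h) rfl rfl]
      rw [hFe, hGe, pfold_step 𝒜 d _ _ i₀ (m i₀) (b i₀) (by simp [hi₀]) (by simp [hi₀])]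
      exact ih (le_of_lt hjp)
  have := key p le_rfl
  simp only [Fin.is_lt, if_true] at this
  exact this.symm


end GradedSetup

/-- If `(𝒜 i)^p = 𝒜 0` and `𝒜 i · 𝒜 (p-i) = 𝒜 0` for all `i = 1, …, p-1`, then for every
`d ∈ {1, …, p-1}` the `p`-fold multiplication map
`𝒜 d ⊗[𝒜 0] ⋯ ⊗[𝒜 0] 𝒜 d → 𝒜 0`, `a_1 ⊗ ⋯ ⊗ a_p ↦ a_1⋯a_p`, is bijective. -/
theorem pfold_mul_bijective
    {A : Type*} [CommRing A] {p : ℕ} (hp : p.Prime)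
    (𝒜 : ZMod p → Submodule ℤ A) [GradedRing 𝒜]
    (hpow : ∀ i ∈ Finset.Icc 1 (p - 1), 𝒜 (i : ZMod p) ^ p = 𝒜 (0 : ZMod p))
    (hmul : ∀ i ∈ Finset.Icc 1 (p - 1),
      𝒜 (i : ZMod p) * 𝒜 ((p - i : ℕ) : ZMod p) = 𝒜 (0 : ZMod p)) :
    ∀ d ∈ Finset.Icc 1 (p - 1),
      Function.Bijective (PiTensorProduct.lift (pfoldMulMultilinear 𝒜 (d : ZMod p))) := by
  classical
  intro d hd
  set D : ZMod p := (d : ZMod p) with hD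
  set μL := PiTensorProduct.lift (pfoldMulMultilinear 𝒜 D) with hμL
  -- step 1 : every element of 𝒜 D ^ n is in the ℤ-span of p-fold products
  have hspan : ∀ n : ℕ, (𝒜 D ^ n : Submodule ℤ A)
      ≤ Submodule.span ℤ {y : A | ∃ f : Fin n → 𝒜 D, y = ∏ i, ((f i : A))} := by
    intro n
    induction n with
    | zero =>
      rw [pow_zero, Submodule.one_eq_span]
      apply Submodule.span_le.mpr
      rintro y hy
      rw [Set.mem_singleton_iff] at hy
      subst hy
      exact Submodule.subset_span ⟨Fin.elim0, by simp⟩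
    | succ n ih =>
      rw [pow_succ]
      apply Submodule.mul_le.mpr
      intro x hx y hy
      refine Submodule.span_induction ?_ ?_ ?_ ?_ (ih hx)
      · rintro z ⟨f, rfl⟩
        apply Submodule.subset_span
        refine ⟨Fin.snoc f ⟨y, hy⟩, ?_⟩
        rw [Fin.prod_univ_castSucc]
        simp
      · simpa using Submodule.zero_mem _
      · intro a b _ _ ha hb
        rw [add_mul]; exact Submodule.add_mem _ ha hb
      · intro z a _ ha
        rw [smul_mul_assoc]; exact Submodule.smul_mem _ _ ha
  -- step 2 : obtain T with μL T = 1
  have h1 : (1 : A) ∈ (𝒜 D ^ p : Submodule ℤ A) := by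
    rw [hpow d hd]; exact SetLike.one_mem_graded 𝒜
  obtain ⟨T, hT⟩ : ∃ t, ((μL t : 𝒜 (0 : ZMod p)) : A) = (1 : A) := by
    refine Submodule.span_induction ?_ ?_ ?_ ?_ (hspan p h1)
    · rintro z ⟨f, rfl⟩
      exact ⟨PiTensorProduct.tprod _ f, by rw [hμL, PiTensorProduct.lift.tprod, coe_pfold]⟩
    · exact ⟨0, by simp⟩
    · rintro a b _ _ ⟨t₁, ht₁⟩ ⟨t₂, ht₂⟩
      exact ⟨t₁ + t₂, by rw [map_add]; push_cast [ht₁, ht₂]; rfl⟩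
    · rintro z a _ ⟨t, ht⟩
      refine ⟨z • t, ?_⟩
      rw [map_zsmul]
      show (z • (μL t : A)) = z • a
      rw [ht]
  have hT1 : μL T = 1 := by
    apply Subtype.ext
    rw [hT]
    rfl
  -- step 3 : swap lemma for general tensors
  have hswap : ∀ t s, μL t • s = μL s • t := by
    intro t s
    induction t using PiTensorProduct.induction_on with
    | smul_tprod r f =>
      induction s using PiTensorProduct.induction_on with
      | smul_tprod r' f' =>
        rw [map_smul, map_smul, smulR_eq_mul, smulR_eq_mul, mul_smul, mul_smul,
          PiTensorProduct.lift.tprod, PiTensorProduct.lift.tprod,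
          smul_comm (pfoldMulMultilinear 𝒜 D f) r', smul_comm (pfoldMulMultilinear 𝒜 D f') r,
          pfold_swap, smul_comm r r']
      | add x y hx hy =>
        rw [map_add, add_smul, smul_add, hx, hy]
    | add x y hx hy =>
      rw [map_add, add_smul, smul_add, hx, hy]
  constructor
  · intro t₁ t₂ h
    have e1 : t₁ = μL t₁ • T := by rw [hswap, hT1, one_smul]
    have e2 : t₂ = μL t₂ • T := by rw [hswap, hT1, one_smul]
    rw [e1, e2, h]
  · intro a
    refine ⟨a • T, ?_⟩
    rw [map_smul, hT1, smulR_eq_mul, mul_one]
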